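/- arXiv:1004.0224 — 2 statements merged into one kernel-verified Lean document; each statement's English description precedes it below -/
import Mathlib

section
/- The map r : C → Ind defined by r(a)(φᵢH₀) = 0 if a(√(−φᵢ(d))) = √(−φᵢ(d)) and r(a)(φᵢH₀) = 1 otherwise does not depend on the choice of the totally positive element d with K = K₀(√−d), and r is an injective homomorphism of G-modules, where G acts on C by conjugation τ·a = τaτ⁻¹ and on Ind by (σ·f)(τH₀) = f(σ⁻¹τH₀). -/
open scoped Classical

/- Setting: `Kc = K^c` is the Galois closure over `ℚ` of a CM-field `K` with maximal totally
real subfield `K₀`; `G = Gal(K^c/ℚ)`, `H₀ = Gal(K^c/K₀)` is the fixing subgroup of `K₀`,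
`C = Gal(K^c/K₀^c)` is the fixing subgroup of the Galois closure `K₀^c` of `K₀`, and
`Ind = Map(G/H₀, ℤ/2ℤ)`.  Embeddings `φᵢ : K₀ ↪ ℂ` correspond to the cosets of `G ⧸ H₀`. -/

/-- The action of `G` on `Ind = Map(G/H₀, ℤ/2ℤ)`: `(σ·f)(τH₀) = f(σ⁻¹τH₀)`. -/
def indAct {G : Type} [Group G] (H₀ : Subgroup G) (σ : G)
    (f : (G ⧸ H₀) → ZMod 2) : (G ⧸ H₀) → ZMod 2 :=
  fun x => f (σ⁻¹ • x)

/-- The map `r : C → Ind` attached to a totally positive `d ∈ K₀` with `K = K₀(√−d)`: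
`r(a)(φᵢH₀) = 0` if `a(√(−φᵢ(d))) = √(−φᵢ(d))` and `r(a)(φᵢH₀) = 1` otherwise, where `φᵢ` is
(a coset of) an automorphism `τ` of `K^c` and `√(−φᵢ(d))` is any square root of `−τ(d)`
in `K^c`. -/
noncomputable def rmap {Kc : Type} [Field Kc] [Algebra ℚ Kc]
    (K₀ : IntermediateField ℚ Kc) (d : Kc) (a : Kc ≃ₐ[ℚ] Kc)
    (x : (Kc ≃ₐ[ℚ] Kc) ⧸ K₀.fixingSubgroup) : ZMod 2 :=
  if ∀ τ : Kc ≃ₐ[ℚ] Kc, (τ : (Kc ≃ₐ[ℚ] Kc) ⧸ K₀.fixingSubgroup) = x →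
      ∀ s : Kc, s ^ 2 = -(τ d) → a s = s
  then 0 else 1

section RmapAux

variable {Kc : Type} [Field Kc] [Algebra ℚ Kc]

lemma sq_cases {t u : Kc} (h : t ^ 2 = u ^ 2) : t = u ∨ t = -u := by
  have h2 : (t - u) * (t + u) = 0 := by linear_combination h
  rcases mul_eq_zero.mp h2 with h3 | h3
  · exact Or.inl (sub_eq_zero.mp h3)
  · exact Or.inr (eq_neg_of_add_eq_zero_left h3)

lemma rmap_cases (K₀ : IntermediateField ℚ Kc) (d : Kc) (a : Kc ≃ₐ[ℚ] Kc)
    (x : (Kc ≃ₐ[ℚ] Kc) ⧸ K₀.fixingSubgroup) :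
    rmap K₀ d a x = 0 ∨ rmap K₀ d a x = 1 := by
  unfold rmap; split <;> simp

lemma zmod2_eq {x y : ZMod 2} (hx : x = 0 ∨ x = 1) (hy : y = 0 ∨ y = 1)
    (h : x = 0 ↔ y = 0) : x = y := by
  rcases hx with hx | hx <;> rcases hy with hy | hy <;> subst hx <;> subst hy <;> simp_all

/-- The fixed points of an automorphism, as an intermediate field. -/
def fixedPointsIF (h : Kc ≃ₐ[ℚ] Kc) : IntermediateField ℚ Kc :=
  (AlgHom.equalizer (h : Kc →ₐ[ℚ] Kc) (AlgHom.id ℚ Kc)).toIntermediateField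
    (fun x hx => by
      have hx' : h x = x := hx
      show h x⁻¹ = x⁻¹
      rw [map_inv₀, hx'])

lemma mem_fixedPointsIF {h : Kc ≃ₐ[ℚ] Kc} {x : Kc} : x ∈ fixedPointsIF h ↔ h x = x := Iff.rfl

lemma fix_of_C {K₀ : IntermediateField ℚ Kc} {a : Kc ≃ₐ[ℚ] Kc}
    (ha : a ∈ (IntermediateField.normalClosure ℚ ↥K₀ Kc).fixingSubgroup)
    (τ : Kc ≃ₐ[ℚ] Kc) {x : Kc} (hx : x ∈ K₀) : a (τ x) = τ x := by
  refine (IntermediateField.mem_fixingSubgroup_iff _ a).mp ha _ ?_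
  exact AlgHom.fieldRange_le_normalClosure
    ((τ : Kc →+* Kc).comp (K₀.val : ↥K₀ →+* Kc)).toRatAlgHom ⟨⟨x, hx⟩, rfl⟩

lemma rmap_cond_of {K₀ : IntermediateField ℚ Kc} {d s : Kc} (hd : d ∈ K₀)
    (hs2 : s ^ 2 = -d) {a : Kc ≃ₐ[ℚ] Kc} (τ : Kc ≃ₐ[ℚ] Kc) (h : a (τ s) = τ s) :
    ∀ τ' : Kc ≃ₐ[ℚ] Kc, (τ' : (Kc ≃ₐ[ℚ] Kc) ⧸ K₀.fixingSubgroup) = ↑τ →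
      ∀ t : Kc, t ^ 2 = -(τ' d) → a t = t := by
  intro τ' hτ' t ht
  have hmem : τ'⁻¹ * τ ∈ K₀.fixingSubgroup := QuotientGroup.eq.mp hτ'
  have hτd : τ' d = τ d := by
    have h1 : τ'⁻¹ (τ d) = d := by
      have := (IntermediateField.mem_fixingSubgroup_iff _ _).mp hmem d hd
      rwa [AlgEquiv.mul_apply] at this
    calc τ' d = τ' (τ'⁻¹ (τ d)) := by rw [h1]
      _ = (τ' * τ'⁻¹) (τ d) := (AlgEquiv.mul_apply _ _ _).symm
      _ = τ d := by rw [mul_inv_cancel, AlgEquiv.one_apply]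
  have hτs : (τ s) ^ 2 = -(τ d) := by rw [← map_pow, hs2, map_neg]
  have hts : t ^ 2 = (τ s) ^ 2 := by rw [ht, hτd, hτs]
  rcases sq_cases hts with rfl | rfl
  · exact h
  · rw [map_neg, h]

lemma rmap_mk_eq_zero_iff {K₀ : IntermediateField ℚ Kc} {d s : Kc} (hd : d ∈ K₀)
    (hs2 : s ^ 2 = -d) (a τ : Kc ≃ₐ[ℚ] Kc) :
    rmap K₀ d a (τ : (Kc ≃ₐ[ℚ] Kc) ⧸ K₀.fixingSubgroup) = 0 ↔ a (τ s) = τ s := by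
  have hτs : (τ s) ^ 2 = -(τ d) := by rw [← map_pow, hs2, map_neg]
  constructor
  · intro h0
    by_cases hP : ∀ τ' : Kc ≃ₐ[ℚ] Kc,
        (τ' : (Kc ≃ₐ[ℚ] Kc) ⧸ K₀.fixingSubgroup) = ↑τ →
        ∀ t : Kc, t ^ 2 = -(τ' d) → a t = t
    · exact hP τ rfl (τ s) hτs
    · exfalso
      have : rmap K₀ d a (τ : (Kc ≃ₐ[ℚ] Kc) ⧸ K₀.fixingSubgroup) = 1 := by
        unfold rmap; rw [if_neg hP]
      rw [h0] at this
      exact one_ne_zero this.symm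
  · intro h
    unfold rmap
    rw [if_pos (rmap_cond_of hd hs2 τ h)]

lemma apply_pm {K₀ : IntermediateField ℚ Kc} {d s : Kc} (hd : d ∈ K₀) (hs2 : s ^ 2 = -d)
    {a : Kc ≃ₐ[ℚ] Kc} (ha : a ∈ (IntermediateField.normalClosure ℚ ↥K₀ Kc).fixingSubgroup)
    (τ : Kc ≃ₐ[ℚ] Kc) : a (τ s) = τ s ∨ a (τ s) = -(τ s) := by
  have key : (a (τ s)) ^ 2 = (τ s) ^ 2 := by
    have e1 : (a (τ s)) ^ 2 = a (τ (s ^ 2)) := by rw [map_pow, map_pow]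
    have e2 : (τ s) ^ 2 = τ (s ^ 2) := by rw [map_pow]
    rw [e1, e2, hs2, map_neg, map_neg, fix_of_C ha τ hd]
  exact sq_cases key

lemma fix_sup {K₀ : IntermediateField ℚ Kc} {s : Kc} {h : Kc ≃ₐ[ℚ] Kc}
    (h₀ : ∀ x ∈ K₀, h x = x) (hs : h s = s) :
    ∀ x ∈ K₀ ⊔ IntermediateField.adjoin ℚ {s}, h x = x := by
  intro x hx
  have hle : K₀ ⊔ IntermediateField.adjoin ℚ {s} ≤ fixedPointsIF h :=
    sup_le (fun y hy => h₀ y hy)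
      (IntermediateField.adjoin_le_iff.mpr (Set.singleton_subset_iff.mpr hs))
  exact hle hx

lemma false_of_eq_neg {x : Kc} (hx0 : x ≠ 0) (h : x = -x) : False := by
  haveI : CharZero Kc := charZero_of_injective_algebraMap (algebraMap ℚ Kc).injective
  have h3 : (2 : Kc) * x = 0 := by linear_combination h
  rcases mul_eq_zero.mp h3 with h4 | h4
  · exact two_ne_zero h4
  · exact hx0 h4

lemma mem_of_fixed [FiniteDimensional ℚ Kc] [IsGalois ℚ Kc]
    {x : Kc} (K₀ : IntermediateField ℚ Kc)
    (h : ∀ g : Kc ≃ₐ[ℚ] Kc, g ∈ K₀.fixingSubgroup → g x = x) : x ∈ K₀ := by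
  have hle : IntermediateField.adjoin ℚ {x} ≤ K₀ := by
    conv_rhs => rw [← IsGalois.fixedField_fixingSubgroup K₀]
    rw [IntermediateField.le_iff_le]
    intro g hg
    rw [IntermediateField.mem_fixingSubgroup_iff]
    intro y hy
    have : IntermediateField.adjoin ℚ {x} ≤ fixedPointsIF g :=
      IntermediateField.adjoin_le_iff.mpr (Set.singleton_subset_iff.mpr (h g hg))
    exact this hy
  exact hle (IntermediateField.mem_adjoin_simple_self ℚ x)

end RmapAux

/-- **Lemma.** The map `r : C → Ind` does not depend on the choice of the
totally positive element `d` with `K = K₀(√−d)`, and `r` is an injective homomorphism of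
`G`-modules, where `G` acts on `C` by conjugation `τ·a = τaτ⁻¹` and on `Ind` by
`(σ·f)(τH₀) = f(σ⁻¹τH₀)`. -/
theorem rmap_independent_injective_equivariant
    (Kc : Type) [Field Kc] [NumberField Kc] [IsGalois ℚ Kc]
    (K₀ K : IntermediateField ℚ Kc) (hle : K₀ ≤ K)
    -- `K₀` is totally real
    (htr : ∀ σ : Kc →+* ℂ, ∀ x ∈ K₀, (σ x).im = 0)
    -- `K` is totally imaginary
    (hti : ∀ σ : Kc →+* ℂ, ∃ x ∈ K, (σ x).im ≠ 0)
    -- `[K : K₀] = 2`  and  `K^c` is the Galois closure of `K` over `ℚ`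
    (hdeg : Module.finrank ℚ K = 2 * Module.finrank ℚ K₀)
    (hgal : IntermediateField.normalClosure ℚ ↥K Kc = ⊤)
    (d d' : Kc) (hd : d ∈ K₀) (hd' : d' ∈ K₀)
    -- `d`, `d'` are totally positive
    (hdpos : ∀ σ : Kc →+* ℂ, 0 < (σ d).re ∧ (σ d).im = 0)
    (hdpos' : ∀ σ : Kc →+* ℂ, 0 < (σ d').re ∧ (σ d').im = 0)
    -- `K = K₀(√−d) = K₀(√−d')`
    (hKd : ∃ s : Kc, s ^ 2 = -d ∧ K = K₀ ⊔ IntermediateField.adjoin ℚ {s})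
    (hKd' : ∃ s : Kc, s ^ 2 = -d' ∧ K = K₀ ⊔ IntermediateField.adjoin ℚ {s}) :
    -- `r` does not depend on the choice of `d`
    (∀ a ∈ (IntermediateField.normalClosure ℚ ↥K₀ Kc).fixingSubgroup, rmap K₀ d a = rmap K₀ d' a) ∧
    -- `r` is injective on `C`
    (∀ a ∈ (IntermediateField.normalClosure ℚ ↥K₀ Kc).fixingSubgroup,
      ∀ b ∈ (IntermediateField.normalClosure ℚ ↥K₀ Kc).fixingSubgroup,
        rmap K₀ d a = rmap K₀ d b → a = b) ∧
    -- `r` is a homomorphism of (additive) groups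
    (∀ a ∈ (IntermediateField.normalClosure ℚ ↥K₀ Kc).fixingSubgroup,
      ∀ b ∈ (IntermediateField.normalClosure ℚ ↥K₀ Kc).fixingSubgroup,
        rmap K₀ d (a * b) = rmap K₀ d a + rmap K₀ d b) ∧
    -- `r` is `G`-equivariant for conjugation on `C` and the induced action on `Ind`
    (∀ τ : Kc ≃ₐ[ℚ] Kc, ∀ a ∈ (IntermediateField.normalClosure ℚ ↥K₀ Kc).fixingSubgroup,
        rmap K₀ d (τ * a * τ⁻¹) = indAct K₀.fixingSubgroup τ (rmap K₀ d a)) := by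
  obtain ⟨s, hs2, hKs⟩ := hKd
  obtain ⟨s', hs2', hKs'⟩ := hKd'
  have hrank : 0 < Module.finrank ℚ K₀ := Module.finrank_pos
  have hadj0 : IntermediateField.adjoin ℚ ({(0 : Kc)} : Set Kc) = ⊥ :=
    le_antisymm (IntermediateField.adjoin_le_iff.mpr (Set.singleton_subset_iff.mpr (zero_mem ⊥))) bot_le
  have hs0 : s ≠ 0 := by
    rintro rfl
    rw [hadj0, sup_bot_eq] at hKs
    rw [hKs] at hdeg
    omega
  have hs0' : s' ≠ 0 := by
    rintro rfl
    rw [hadj0, sup_bot_eq] at hKs'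
    rw [hKs'] at hdeg
    omega
  have hsK : s ∈ K := by
    rw [hKs]; exact SetLike.le_def.mp le_sup_right (IntermediateField.mem_adjoin_simple_self ℚ s)
  have hsK' : s' ∈ K := by
    rw [hKs']; exact SetLike.le_def.mp le_sup_right (IntermediateField.mem_adjoin_simple_self ℚ s')
  -- the basic ± dichotomy for elements of the fixing subgroup of K₀
  have hpm : ∀ (h : Kc ≃ₐ[ℚ] Kc), h ∈ K₀.fixingSubgroup → ∀ (t e : Kc), e ∈ K₀ →
      t ^ 2 = -e → h t = t ∨ h t = -t := by
    intro h hh t e he ht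
    refine sq_cases ?_
    have h1 : (h t) ^ 2 = h (t ^ 2) := (map_pow h t 2).symm
    rw [h1, ht, map_neg, (IntermediateField.mem_fixingSubgroup_iff _ _).mp hh e he, ← ht]
  -- every element of the fixing subgroup of K₀ moves s and s' "in the same way"
  have hfixchar : ∀ h : Kc ≃ₐ[ℚ] Kc, h ∈ K₀.fixingSubgroup →
      (h s = s ∧ h s' = s') ∨ (h s = -s ∧ h s' = -s') := by
    intro h hh
    have h₀ : ∀ x ∈ K₀, h x = x := (IntermediateField.mem_fixingSubgroup_iff _ _).mp hh
    rcases hpm h hh s d hd hs2 with hs1 | hs1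
    · left
      refine ⟨hs1, ?_⟩
      have := fix_sup h₀ hs1 s' (by rw [← hKs]; exact hsK')
      exact this
    · rcases hpm h hh s' d' hd' hs2' with hs1' | hs1'
      · exfalso
        have := fix_sup h₀ hs1' s (by rw [← hKs']; exact hsK)
        rw [this] at hs1
        exact false_of_eq_neg hs0 hs1
      · exact Or.inr ⟨hs1, hs1'⟩
  have he : s' / s ∈ K₀ := by
    refine mem_of_fixed K₀ ?_
    intro g hg
    rcases hfixchar g hg with ⟨h1, h2⟩ | ⟨h1, h2⟩
    · rw [map_div₀, h1, h2]
    · rw [map_div₀, h1, h2, neg_div_neg_eq]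
  have hv : s' = (s' / s) * s := (div_mul_cancel₀ s' hs0).symm
  have hτs0 : ∀ τ : Kc ≃ₐ[ℚ] Kc, τ s ≠ 0 := by
    intro τ h
    exact hs0 (τ.injective (by rw [h, map_zero]))
  refine ⟨?_, ?_, ?_, ?_⟩
  · -- independence of d
    intro a ha
    funext x
    obtain ⟨τ, rfl⟩ := QuotientGroup.mk_surjective x
    refine zmod2_eq (rmap_cases _ _ _ _) (rmap_cases _ _ _ _) ?_
    rw [rmap_mk_eq_zero_iff hd hs2 a τ, rmap_mk_eq_zero_iff hd' hs2' a τ]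
    have hv0 : s' / s ≠ 0 := div_ne_zero hs0' hs0
    have hτv0 : τ (s' / s) ≠ 0 := fun h => hv0 (τ.injective (by rw [h, map_zero]))
    have hfix : a (τ (s' / s)) = τ (s' / s) := fix_of_C ha τ he
    constructor
    · intro h1
      calc a (τ s') = a (τ ((s' / s) * s)) := by rw [← hv]
        _ = a (τ (s' / s)) * a (τ s) := by rw [map_mul, map_mul]
        _ = τ (s' / s) * τ s := by rw [hfix, h1]
        _ = τ ((s' / s) * s) := (map_mul τ _ _).symm
        _ = τ s' := by rw [← hv]
    · intro h1
      have h2 : τ (s' / s) * a (τ s) = τ (s' / s) * τ s := by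
        calc τ (s' / s) * a (τ s) = a (τ (s' / s)) * a (τ s) := by rw [hfix]
          _ = a (τ ((s' / s) * s)) := by rw [map_mul, map_mul]
          _ = a (τ s') := by rw [← hv]
          _ = τ s' := h1
          _ = τ ((s' / s) * s) := congrArg τ hv
          _ = τ (s' / s) * τ s := map_mul τ _ _
      exact mul_left_cancel₀ hτv0 h2
  · -- injectivity
    intro a ha b hb hab
    have hc : b⁻¹ * a ∈ (IntermediateField.normalClosure ℚ ↥K₀ Kc).fixingSubgroup := mul_mem (inv_mem hb) ha
    have key : ∀ τ : Kc ≃ₐ[ℚ] Kc, a (τ s) = b (τ s) := by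
      intro τ
      have hiff : a (τ s) = τ s ↔ b (τ s) = τ s := by
        rw [← rmap_mk_eq_zero_iff hd hs2 a τ, ← rmap_mk_eq_zero_iff hd hs2 b τ, hab]
      rcases apply_pm hd hs2 ha τ with h1 | h1 <;> rcases apply_pm hd hs2 hb τ with h2 | h2
      · rw [h1, h2]
      · exfalso
        have := hiff.mp h1
        rw [h2] at this
        exact false_of_eq_neg (hτs0 τ) this.symm
      · exfalso
        have := hiff.mpr h2
        rw [h1] at this
        exact false_of_eq_neg (hτs0 τ) this.symm
      · rw [h1, h2]
    have hcs : ∀ τ : Kc ≃ₐ[ℚ] Kc, (b⁻¹ * a) (τ s) = τ s := by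
      intro τ
      rw [AlgEquiv.mul_apply, key τ, ← AlgEquiv.mul_apply, inv_mul_cancel,
        AlgEquiv.one_apply]
    have hfixall : ∀ x : Kc, (b⁻¹ * a) x = x := by
      have htop : (⊤ : IntermediateField ℚ Kc) ≤ fixedPointsIF (b⁻¹ * a) := by
        rw [← hgal, normalClosure_le_iff]
        intro f
        set τ : Kc ≃ₐ[ℚ] Kc :=
          AlgEquiv.ofBijective (f.liftNormal Kc) (AlgHom.normal_bijective ℚ Kc Kc _) with hτdef
        have hτf : ∀ y : ↥K, τ (y : Kc) = f y := by
          intro y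
          have := AlgHom.liftNormal_commutes f Kc y
          exact this
        have hKfix : ∀ z ∈ K, (b⁻¹ * a) (τ z) = τ z := by
          have hile : K₀ ⊔ IntermediateField.adjoin ℚ {s} ≤
              fixedPointsIF (τ⁻¹ * (b⁻¹ * a) * τ) := by
            refine sup_le ?_
              (IntermediateField.adjoin_le_iff.mpr (Set.singleton_subset_iff.mpr ?_))
            · intro x hx
              show (τ⁻¹ * (b⁻¹ * a) * τ) x = x
              rw [AlgEquiv.mul_apply, AlgEquiv.mul_apply, fix_of_C hc τ hx,
                ← AlgEquiv.mul_apply, inv_mul_cancel, AlgEquiv.one_apply]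
            · show (τ⁻¹ * (b⁻¹ * a) * τ) s = s
              rw [AlgEquiv.mul_apply, AlgEquiv.mul_apply, hcs τ,
                ← AlgEquiv.mul_apply, inv_mul_cancel, AlgEquiv.one_apply]
          intro z hz
          have hz' : z ∈ K₀ ⊔ IntermediateField.adjoin ℚ {s} := by rw [← hKs]; exact hz
          have := hile hz'
          have h1 : (τ⁻¹ * (b⁻¹ * a) * τ) z = z := this
          rw [AlgEquiv.mul_apply, AlgEquiv.mul_apply] at h1
          have h2 : τ (τ⁻¹ ((b⁻¹ * a) (τ z))) = τ z := congrArg τ h1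
          rwa [show (τ⁻¹ : Kc ≃ₐ[ℚ] Kc) = τ.symm from rfl,
            AlgEquiv.apply_symm_apply] at h2
        rintro x ⟨y, rfl⟩
        show (b⁻¹ * a) (f y) = f y
        rw [← hτf y]
        exact hKfix (y : Kc) y.2
      intro x
      exact htop (IntermediateField.mem_top (x := x))
    refine AlgEquiv.ext fun x => ?_
    have h0 := hfixall x
    rw [AlgEquiv.mul_apply] at h0
    have h2 : b (b⁻¹ (a x)) = b x := congrArg b h0
    rwa [show (b⁻¹ : Kc ≃ₐ[ℚ] Kc) = b.symm from rfl,
      AlgEquiv.apply_symm_apply] at h2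
  · -- homomorphism
    intro a ha b hb
    funext x
    obtain ⟨τ, rfl⟩ := QuotientGroup.mk_surjective x
    have hzero : ∀ c : Kc ≃ₐ[ℚ] Kc, c (τ s) = τ s →
        rmap K₀ d c (τ : (Kc ≃ₐ[ℚ] Kc) ⧸ K₀.fixingSubgroup) = 0 :=
      fun c hcc => (rmap_mk_eq_zero_iff hd hs2 c τ).mpr hcc
    have hone : ∀ c : Kc ≃ₐ[ℚ] Kc, c (τ s) = -(τ s) →
        rmap K₀ d c (τ : (Kc ≃ₐ[ℚ] Kc) ⧸ K₀.fixingSubgroup) = 1 := by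
      intro c hcc
      rcases rmap_cases K₀ d c ((τ : (Kc ≃ₐ[ℚ] Kc) ⧸ K₀.fixingSubgroup)) with h | h
      · exfalso
        have := (rmap_mk_eq_zero_iff hd hs2 c τ).mp h
        rw [hcc] at this
        exact false_of_eq_neg (hτs0 τ) this.symm
      · exact h
    rw [Pi.add_apply]
    rcases apply_pm hd hs2 ha τ with h1 | h1 <;> rcases apply_pm hd hs2 hb τ with h2 | h2
    · rw [hzero a h1, hzero b h2, hzero (a * b) (by rw [AlgEquiv.mul_apply, h2, h1])]
      decide
    · rw [hzero a h1, hone b h2, hone (a * b)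
        (by rw [AlgEquiv.mul_apply, h2, map_neg, h1])]
      decide
    · rw [hone a h1, hzero b h2, hone (a * b) (by rw [AlgEquiv.mul_apply, h2, h1])]
      decide
    · rw [hone a h1, hone b h2, hzero (a * b)
        (by rw [AlgEquiv.mul_apply, h2, map_neg, h1, neg_neg])]
      decide
  · -- equivariance
    intro τ a ha
    have hstab : ∀ (g : Kc ≃ₐ[ℚ] Kc) {x : Kc}, x ∈ IntermediateField.normalClosure ℚ ↥K₀ Kc →
        g x ∈ IntermediateField.normalClosure ℚ ↥K₀ Kc := by
      intro g x hx
      have hmapeq : (IntermediateField.normalClosure ℚ ↥K₀ Kc).map (g : Kc →ₐ[ℚ] Kc)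
          = IntermediateField.normalClosure ℚ ↥K₀ Kc :=
        IntermediateField.normal_iff_forall_map_eq'.mp inferInstance g
      rw [← hmapeq]
      exact ⟨x, hx, rfl⟩
    have hconj : τ * a * τ⁻¹ ∈ (IntermediateField.normalClosure ℚ ↥K₀ Kc).fixingSubgroup := by
      rw [IntermediateField.mem_fixingSubgroup_iff]
      intro x hx
      have hx' : τ⁻¹ x ∈ IntermediateField.normalClosure ℚ ↥K₀ Kc := hstab τ⁻¹ hx
      rw [AlgEquiv.mul_apply, AlgEquiv.mul_apply,
        (IntermediateField.mem_fixingSubgroup_iff _ _).mp ha _ hx',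
        ← AlgEquiv.mul_apply, mul_inv_cancel, AlgEquiv.one_apply]
    funext x
    obtain ⟨σ, rfl⟩ := QuotientGroup.mk_surjective x
    have hsmul : τ⁻¹ • ((σ : (Kc ≃ₐ[ℚ] Kc) ⧸ K₀.fixingSubgroup)) =
        ((τ⁻¹ * σ : Kc ≃ₐ[ℚ] Kc) : (Kc ≃ₐ[ℚ] Kc) ⧸ K₀.fixingSubgroup) := rfl
    show rmap K₀ d (τ * a * τ⁻¹) _ = rmap K₀ d a (τ⁻¹ • _)
    rw [hsmul]
    refine zmod2_eq (rmap_cases _ _ _ _) (rmap_cases _ _ _ _) ?_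
    rw [rmap_mk_eq_zero_iff hd hs2 (τ * a * τ⁻¹) σ,
      rmap_mk_eq_zero_iff hd hs2 a (τ⁻¹ * σ)]
    have happ : (τ * a * τ⁻¹) (σ s) = τ (a ((τ⁻¹ * σ) s)) := by
      rw [AlgEquiv.mul_apply, AlgEquiv.mul_apply, AlgEquiv.mul_apply]
    constructor
    · intro h1
      rw [happ] at h1
      have h2 : τ (a ((τ⁻¹ * σ) s)) = τ ((τ⁻¹ * σ) s) := by
        rw [h1, AlgEquiv.mul_apply, ← AlgEquiv.mul_apply, mul_inv_cancel,
          AlgEquiv.one_apply]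
      exact τ.injective h2
    · intro h1
      rw [happ, h1, AlgEquiv.mul_apply, ← AlgEquiv.mul_apply, mul_inv_cancel,
        AlgEquiv.one_apply]
end

section
/- Let n ≥ 2 be even and let G = ⟨α, β : α^{2n} = 1, β² = 1, βαβ⁻¹ = α⁻¹⟩ be the dihedral group of order 4n. Put H = {1, β}, H₀ = {1, β, αⁿ, αⁿβ}, H̃ = {1, α^{n−1}β}, and H̃₀ = {1, α^{n−1}β, αⁿ, α^{2n−1}β}. Then the induced characters Ind_{H₀}^G(χ_{H₀/H}) and Ind_{H̃₀}^G(χ_{H̃₀/H̃}) are equal as characters of G. -/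
open scoped Classical

/-- The induced character `Ind_U^G(χ_{U/V})` of the nontrivial character `χ_{U/V} : U → {±1}`
with kernel `V` (a normal subgroup of `U` of index 2), computed by the standard induction
formula `(Ind_U^G χ)(g) = |U|⁻¹ ∑_{x ∈ G, x⁻¹gx ∈ U} χ(x⁻¹gx)`. -/
noncomputable def indSignChar {G : Type} [Group G] (U V : Subgroup G) (g : G) : ℂ :=
  (Nat.card U : ℂ)⁻¹ *
    ∑ᶠ x : G, if x⁻¹ * g * x ∈ U then (if x⁻¹ * g * x ∈ V then 1 else -1) else 0

open DihedralGroup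

lemma dih_r_inv {N : ℕ} (i : ZMod N) : (r i : DihedralGroup N)⁻¹ = r (-i) := rfl
lemma dih_sr_inv {N : ℕ} (i : ZMod N) : (sr i : DihedralGroup N)⁻¹ = sr i := rfl

lemma aux_sum_zero {n : ℕ} (hn2 : 2 ≤ n) (hneven : Even n)
    [NeZero (2 * n)]
    (f : DihedralGroup (2 * n) → ℂ)
    (hf : ∀ k : ZMod (2 * n), f (sr (k + (n : ZMod (2 * n)))) = - f (sr k))
    (j : ZMod (2 * n)) :
    ∑ x : DihedralGroup (2 * n), f (x⁻¹ * sr j * x) = 0 := by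
  obtain ⟨c, hc⟩ := hneven
  set m : ZMod (2 * n) := ((c : ℕ) : ZMod (2 * n)) with hm
  have h2m : m + m = (n : ZMod (2 * n)) := by
    rw [hm, ← Nat.cast_add]; congr 1; omega
  have key : ∀ x : DihedralGroup (2 * n),
      f ((x * r m)⁻¹ * sr j * (x * r m)) = - f (x⁻¹ * sr j * x) := by
    rintro (i | i)
    · simp only [r_mul_r, dih_r_inv, r_mul_sr, sr_mul_r]
      have h : j - -(i + m) + (i + m) = (j - -i + i) + (n : ZMod (2 * n)) := by
        rw [← h2m]; ring
      rw [h, hf]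
    · simp only [sr_mul_r, dih_sr_inv, sr_mul_sr, r_mul_sr]
      have h : i + m - (j - (i + m)) = (i - (j - i)) + (n : ZMod (2 * n)) := by
        rw [← h2m]; ring
      rw [h, hf]
  have h1 : ∑ x : DihedralGroup (2 * n), f ((x * r m)⁻¹ * sr j * (x * r m))
      = ∑ x : DihedralGroup (2 * n), f (x⁻¹ * sr j * x) :=
    Fintype.sum_equiv (Equiv.mulRight (r m)) _ _ (fun x => rfl)
  have h2 : ∑ x : DihedralGroup (2 * n), f ((x * r m)⁻¹ * sr j * (x * r m))
      = - ∑ x : DihedralGroup (2 * n), f (x⁻¹ * sr j * x) := by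
    rw [← Finset.sum_neg_distrib]
    exact Finset.sum_congr rfl fun x _ => key x
  have h3 : ∑ x : DihedralGroup (2 * n), f (x⁻¹ * sr j * x)
      = - ∑ x : DihedralGroup (2 * n), f (x⁻¹ * sr j * x) := h1.symm.trans h2
  linear_combination h3 / 2

/-- Let `n ≥ 2` be even and `G = ⟨α, β ∣ α^{2n} = 1, β² = 1, βαβ⁻¹ = α⁻¹⟩`
the dihedral group of order `4n`.  Put `H = {1, β}`, `H₀ = {1, β, αⁿ, αⁿβ}`,
`H̃ = {1, α^{n−1}β}` and `H̃₀ = {1, α^{n−1}β, αⁿ, α^{2n−1}β}`.  Then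
`Ind_{H₀}^G(χ_{H₀/H}) = Ind_{H̃₀}^G(χ_{H̃₀/H̃})` as characters of `G` (Shimura's identity). -/
theorem dihedral_character_identity
    (n : ℕ) (hn2 : 2 ≤ n) (hneven : Even n)
    (α β : DihedralGroup (2 * n)) (hα : α = DihedralGroup.r 1) (hβ : β = DihedralGroup.sr 0)
    (H H₀ Ht Ht₀ : Subgroup (DihedralGroup (2 * n)))
    (hH : (H : Set (DihedralGroup (2 * n))) = {1, β})
    (hH₀ : (H₀ : Set (DihedralGroup (2 * n))) = {1, β, α ^ n, α ^ n * β})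
    (hHt : (Ht : Set (DihedralGroup (2 * n))) = {1, α ^ (n - 1) * β})
    (hHt₀ : (Ht₀ : Set (DihedralGroup (2 * n))) =
      {1, α ^ (n - 1) * β, α ^ n, α ^ (2 * n - 1) * β}) :
    ∀ g : DihedralGroup (2 * n), indSignChar H₀ H g = indSignChar Ht₀ Ht g := by
  haveI : NeZero (2 * n) := ⟨by omega⟩
  have hn0 : (n : ZMod (2 * n)) ≠ 0 := by
    intro h
    rw [ZMod.natCast_eq_zero_iff] at h
    exact absurd (Nat.le_of_dvd (by omega) h) (by omega)
  have hnn : (n : ZMod (2 * n)) + n = 0 := by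
    have h := ZMod.natCast_self (2 * n)
    push_cast at h
    linear_combination h
  -- canonical forms of the generators
  have hαn : α ^ n = r (n : ZMod (2 * n)) := by rw [hα, r_one_pow]
  have hαnβ : α ^ n * β = sr (n : ZMod (2 * n)) := by
    rw [hαn, hβ, r_mul_sr]
    congr 1
    linear_combination -hnn
  have hα1β : α ^ (n - 1) * β = sr ((n : ZMod (2 * n)) + 1) := by
    rw [hα, r_one_pow, hβ, r_mul_sr]
    congr 1
    have e1 : ((n - 1 : ℕ) : ZMod (2 * n)) + ((n + 1 : ℕ) : ZMod (2 * n)) = 0 := by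
      rw [← Nat.cast_add, show n - 1 + (n + 1) = 2 * n from by omega, ZMod.natCast_self]
    push_cast at e1
    linear_combination -e1
  have hα2β : α ^ (2 * n - 1) * β = sr (1 : ZMod (2 * n)) := by
    rw [hα, r_one_pow, hβ, r_mul_sr]
    congr 1
    have e1 : ((2 * n - 1 : ℕ) : ZMod (2 * n)) + 1 = 0 := by
      rw [show (1 : ZMod (2*n)) = ((1:ℕ) : ZMod (2*n)) from by norm_num,
        ← Nat.cast_add, show 2 * n - 1 + 1 = 2 * n from by omega, ZMod.natCast_self]
    linear_combination -e1
  -- explicit descriptions of the subgroups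
  have hH' : (H : Set (DihedralGroup (2 * n))) = {r 0, sr 0} := by
    rw [hH, hβ, one_def]
  have hH₀' : (H₀ : Set (DihedralGroup (2 * n)))
      = {r 0, sr 0, r (n : ZMod (2 * n)), sr (n : ZMod (2 * n))} := by
    rw [hH₀, hαnβ, hαn, hβ, one_def]
  have hHt' : (Ht : Set (DihedralGroup (2 * n))) = {r 0, sr ((n : ZMod (2 * n)) + 1)} := by
    rw [hHt, hα1β, one_def]
  have hHt₀' : (Ht₀ : Set (DihedralGroup (2 * n)))
      = {r 0, sr ((n : ZMod (2 * n)) + 1), r (n : ZMod (2 * n)), sr (1 : ZMod (2 * n))} := by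
    rw [hHt₀, hα1β, hαn, hα2β, one_def]
  -- membership lemmas
  have memH : ∀ x, x ∈ H ↔ x = r 0 ∨ x = sr 0 := by
    intro x; rw [← SetLike.mem_coe, hH']; simp
  have memH₀ : ∀ x, x ∈ H₀ ↔
      x = r 0 ∨ x = sr 0 ∨ x = r (n : ZMod (2 * n)) ∨ x = sr (n : ZMod (2 * n)) := by
    intro x; rw [← SetLike.mem_coe, hH₀']; simp
  have memHt : ∀ x, x ∈ Ht ↔ x = r 0 ∨ x = sr ((n : ZMod (2 * n)) + 1) := by
    intro x; rw [← SetLike.mem_coe, hHt']; simp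
  have memHt₀ : ∀ x, x ∈ Ht₀ ↔
      x = r 0 ∨ x = sr ((n : ZMod (2 * n)) + 1) ∨ x = r (n : ZMod (2 * n))
        ∨ x = sr (1 : ZMod (2 * n)) := by
    intro x; rw [← SetLike.mem_coe, hHt₀']; simp
  -- cardinalities
  have h0n : (0 : ZMod (2 * n)) ≠ (n : ZMod (2 * n)) := fun h => hn0 h.symm
  have hne1 : (n : ZMod (2 * n)) + 1 ≠ 1 := by
    intro h; exact hn0 (by linear_combination h)
  have cardH₀ : Nat.card H₀ = 4 := by
    have h : Nat.card H₀ = ((H₀ : Set (DihedralGroup (2 * n)))).ncard := by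
      rw [← SetLike.coe_sort_coe]; exact Nat.card_coe_set_eq _
    rw [h, hH₀']
    rw [Set.ncard_insert_of_notMem (by simp [hn0, h0n, -r_zero]),
      Set.ncard_insert_of_notMem (by simp [h0n]),
      Set.ncard_pair (by simp)]
  have cardHt₀ : Nat.card Ht₀ = 4 := by
    have h : Nat.card Ht₀ = ((Ht₀ : Set (DihedralGroup (2 * n)))).ncard := by
      rw [← SetLike.coe_sort_coe]; exact Nat.card_coe_set_eq _
    rw [h, hHt₀']
    rw [Set.ncard_insert_of_notMem (by simp [hn0, h0n, -r_zero]),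
      Set.ncard_insert_of_notMem (by simp [hne1]),
      Set.ncard_pair (by simp)]
  -- useful arithmetic in ZMod (2n)
  have e0 : ∀ k : ZMod (2 * n), k + n = 0 ↔ k = n :=
    fun k => ⟨fun h => by linear_combination h - hnn, fun h => by linear_combination h + hnn⟩
  have en : ∀ k : ZMod (2 * n), k + n = n ↔ k = 0 := fun k => by
    constructor <;> intro h <;> linear_combination h
  have e1 : ∀ k : ZMod (2 * n), k + n = n + 1 ↔ k = 1 := fun k => by
    constructor <;> intro h <;> linear_combination h
  have e1' : ∀ k : ZMod (2 * n), k + n = 1 ↔ k = n + 1 :=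
    fun k => ⟨fun h => by linear_combination h - hnn, fun h => by linear_combination h + hnn⟩
  intro g
  unfold indSignChar
  rw [finsum_eq_sum_of_fintype, finsum_eq_sum_of_fintype, cardH₀, cardHt₀]
  rcases g with j | j
  · -- rotations: termwise equal
    congr 1
    apply Finset.sum_congr rfl
    intro x _
    obtain ⟨k, hk⟩ : ∃ k, x⁻¹ * r j * x = r k := by
      rcases x with i | i
      · exact ⟨-i + j + i, by simp [dih_r_inv]⟩
      · exact ⟨i - (i + j), by simp [dih_sr_inv]⟩
    rw [hk]
    simp only [memH, memH₀, memHt, memHt₀]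
    by_cases h0 : k = 0
    · simp [h0]
    · by_cases h1 : k = (n : ZMod (2 * n))
      · simp [h1, hn0, Ne.symm hn0]
      · simp [h0, h1]
  · -- reflections: both sums vanish
    have hf1 : ∀ k : ZMod (2 * n),
        (fun y => if y ∈ H₀ then (if y ∈ H then (1 : ℂ) else -1) else 0)
          (sr (k + (n : ZMod (2 * n))))
        = - (fun y => if y ∈ H₀ then (if y ∈ H then (1 : ℂ) else -1) else 0) (sr k) := by
      intro k
      simp only [memH, memH₀]
      by_cases h0 : k = 0
      · simp [h0, e0 0, en 0, hn0, h0n, -r_zero]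
      · by_cases h1 : k = (n : ZMod (2 * n))
        · simp [h1, e0 (n : ZMod (2 * n)), en (n : ZMod (2 * n)), hn0, h0n, -r_zero]
        · simp [h0, h1, e0 k, en k, -r_zero]
    have hf2 : ∀ k : ZMod (2 * n),
        (fun y => if y ∈ Ht₀ then (if y ∈ Ht then (1 : ℂ) else -1) else 0)
          (sr (k + (n : ZMod (2 * n))))
        = - (fun y => if y ∈ Ht₀ then (if y ∈ Ht then (1 : ℂ) else -1) else 0) (sr k) := by
      intro k
      simp only [memHt, memHt₀]
      by_cases h0 : k = 1
      · simp [h0, e1 1, e1' 1, hne1, Ne.symm hne1, -r_zero]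
      · by_cases h1 : k = (n : ZMod (2 * n)) + 1
        · simp [h1, e1 ((n : ZMod (2 * n)) + 1), e1' ((n : ZMod (2 * n)) + 1), hne1,
            Ne.symm hne1, -r_zero]
        · simp [h0, h1, e1 k, e1' k, -r_zero]
    have h1 := aux_sum_zero hn2 hneven
      (fun y => if y ∈ H₀ then (if y ∈ H then (1 : ℂ) else -1) else 0) hf1 j
    have h2 := aux_sum_zero hn2 hneven
      (fun y => if y ∈ Ht₀ then (if y ∈ Ht then (1 : ℂ) else -1) else 0) hf2 j
    rw [h1, h2]
end
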